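/- Let X be a finite nonempty set, θ : X → ℝ, and Z = Σ_{x∈X} exp(θ(x)). Let {γ(x)}_{x∈X} be independent real random variables, each distributed according to the zero-mean Gumbel distribution. Then E_γ[ max_{x∈X} (θ(x) + γ(x)) ] = log Z. -/

import Mathlib

open MeasureTheory Real ProbabilityTheory
open Set
open scoped ENNReal NNReal


lemma integrable_log_mul_exp_neg :
    IntegrableOn (fun t : ℝ => Real.log t * Real.exp (-t)) (Ioi 0) := by
  have h1 : IntegrableOn (fun x : ℝ => Real.exp (-x) * x ^ ((1:ℝ)/2 - 1)) (Ioi 0) :=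
    Real.GammaIntegral_convergent (by norm_num)
  have h2 : IntegrableOn (fun x : ℝ => Real.exp (-x) * x ^ ((2:ℝ) - 1)) (Ioi 0) :=
    Real.GammaIntegral_convergent (by norm_num)
  simp_rw [show ((2:ℝ) - 1) = 1 by norm_num, Real.rpow_one] at h2
  refine Integrable.mono' ((h1.const_mul 2).add h2) ?_ ?_
  · exact (measurable_of_continuousOn_compl_singleton 0
      (continuousOn_log.mono (by simp)) |>.mul
      ((Real.continuous_exp.comp continuous_neg).measurable)).aestronglyMeasurable
  · filter_upwards [self_mem_ae_restrict measurableSet_Ioi] with t (ht : 0 < t)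
    have het : 0 < Real.exp (-t) := Real.exp_pos _
    rw [norm_mul, Real.norm_eq_abs, Real.norm_eq_abs, abs_of_pos het]
    have key : |Real.log t| ≤ 2 * t ^ ((1:ℝ)/2 - 1) + t := by
      rcases le_or_gt 1 t with h | h
      · rw [abs_of_nonneg (Real.log_nonneg h)]
        have : Real.log t ≤ t - 1 := Real.log_le_sub_one_of_pos (by linarith)
        have hp : (0:ℝ) ≤ 2 * t ^ ((1:ℝ)/2-1) := by positivity
        linarith
      · rw [abs_of_nonpos (Real.log_nonpos (le_of_lt ht) h.le)]
        have hs : Real.log (t ^ (-(1:ℝ)/2)) ≤ t ^ (-(1:ℝ)/2) - 1 :=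
          Real.log_le_sub_one_of_pos (Real.rpow_pos_of_pos ht _)
        rw [Real.log_rpow ht] at hs
        have he : t ^ (-(1:ℝ)/2) = t ^ ((1:ℝ)/2 - 1) := by norm_num
        rw [he] at hs
        linarith
    calc |Real.log t| * Real.exp (-t)
        ≤ (2 * t ^ ((1:ℝ)/2 - 1) + t) * Real.exp (-t) :=
          mul_le_mul_of_nonneg_right key het.le
      _ = 2 * (Real.exp (-t) * t ^ ((1:ℝ)/2-1)) + Real.exp (-t) * t := by ring

lemma integral_log_mul_exp_neg :
    ∫ t in Ioi (0:ℝ), Real.log t * Real.exp (-t) = -Real.eulerMascheroniConstant := by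
  have hd := Complex.hasDerivAt_GammaIntegral (s := 1) (by simp)
  have heq : Complex.Gamma =ᶠ[nhds (1:ℂ)] Complex.GammaIntegral := by
    filter_upwards [(isOpen_lt continuous_const Complex.continuous_re).mem_nhds
      (by simp : (0:ℝ) < (1:ℂ).re)] with s hs
    exact Complex.Gamma_eq_integral hs
  have hd2 : HasDerivAt Complex.GammaIntegral (-Real.eulerMascheroniConstant : ℂ) 1 := by
    exact_mod_cast Complex.hasDerivAt_Gamma_one.congr_of_eventuallyEq heq.symm
  have hval : (∫ t : ℝ in Ioi 0, (t:ℂ) ^ ((1:ℂ) - 1) * (Real.log t * Real.exp (-t)))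
      = (-Real.eulerMascheroniConstant : ℂ) := hd.unique hd2
  have hfun : (fun t : ℝ => (t:ℂ) ^ ((1:ℂ) - 1) * ((Real.log t : ℂ) * (Real.exp (-t) : ℂ)))
      = fun t : ℝ => ((Real.log t * Real.exp (-t) : ℝ) : ℂ) := by
    funext t
    rw [sub_self, Complex.cpow_zero, one_mul]
    push_cast; ring
  rw [hfun] at hval
  have h2 : ((∫ t in Ioi (0:ℝ), Real.log t * Real.exp (-t) : ℝ) : ℂ)
      = (-Real.eulerMascheroniConstant : ℂ) := by
    rw [← hval]; exact integral_ofReal.symm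
  exact_mod_cast h2

noncomputable def gumbelPdf (t : ℝ) : ℝ :=
  Real.exp (-(t + Real.eulerMascheroniConstant)) *
    Real.exp (-Real.exp (-(t + Real.eulerMascheroniConstant)))

lemma gumb_image : (fun u : ℝ => -Real.log u - Real.eulerMascheroniConstant) '' (Ioi 0) = univ := by
  apply eq_univ_of_forall
  intro t
  refine ⟨Real.exp (-(t + Real.eulerMascheroniConstant)), Real.exp_pos _, ?_⟩
  simp only [Real.log_exp]; ring

lemma gumb_deriv : ∀ u ∈ Ioi (0:ℝ),
    HasDerivWithinAt (fun u : ℝ => -Real.log u - Real.eulerMascheroniConstant) (-u⁻¹) (Ioi 0) u :=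
  fun u hu => (((Real.hasDerivAt_log (ne_of_gt hu)).neg).sub_const _).hasDerivWithinAt

lemma gumb_inj : InjOn (fun u : ℝ => -Real.log u - Real.eulerMascheroniConstant) (Ioi 0) := by
  intro a ha b hb h
  simp only [sub_left_inj, neg_inj] at h
  exact (Real.log_injOn_pos.eq_iff ha hb).mp h

-- main substitution: for any g, ∫_ℝ g = ∫_{u>0} u⁻¹ * g(-log u - c)
lemma gumb_subst (g : ℝ → ℝ) :
    ∫ t, g t = ∫ u in Ioi (0:ℝ), |(-u⁻¹)| • g (-Real.log u - Real.eulerMascheroniConstant) := by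
  rw [← setIntegral_univ, ← gumb_image,
    integral_image_eq_integral_abs_deriv_smul measurableSet_Ioi gumb_deriv gumb_inj]

lemma gumb_subst_int (g : ℝ → ℝ) :
    Integrable g ↔ IntegrableOn
      (fun u => |(-u⁻¹)| • g (-Real.log u - Real.eulerMascheroniConstant)) (Ioi (0:ℝ)) := by
  rw [← integrableOn_univ, ← gumb_image,
    integrableOn_image_iff_integrableOn_abs_deriv_smul measurableSet_Ioi gumb_deriv gumb_inj]

-- the composed pdf
lemma gumb_pdf_comp (u : ℝ) (hu : 0 < u) :
    gumbelPdf (-Real.log u - Real.eulerMascheroniConstant) = u * Real.exp (-u) := by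
  unfold gumbelPdf
  have h : -(-Real.log u - Real.eulerMascheroniConstant + Real.eulerMascheroniConstant)
      = Real.log u := by ring
  rw [h, Real.exp_log hu]

lemma exp_neg_integrableOn_Ioi' : IntegrableOn (fun u : ℝ => Real.exp (-u)) (Ioi (0:ℝ)) :=
  exp_neg_integrableOn_Ioi 0 zero_lt_one |>.congr_fun (fun x _ => by simp) measurableSet_Ioi

lemma gumb_comp_pdf_eq : ∀ u ∈ Ioi (0:ℝ),
    |(-u⁻¹)| • gumbelPdf (-Real.log u - Real.eulerMascheroniConstant) = Real.exp (-u) := by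
  intro u hu
  rw [gumb_pdf_comp u hu, abs_neg, abs_of_pos (inv_pos.mpr hu), smul_eq_mul,
    ← mul_assoc, inv_mul_cancel₀ (ne_of_gt hu), one_mul]

lemma integrable_gumbelPdf : Integrable gumbelPdf := by
  rw [gumb_subst_int]
  exact exp_neg_integrableOn_Ioi'.congr_fun
    (fun u hu => (gumb_comp_pdf_eq u hu).symm) measurableSet_Ioi

lemma integral_gumbelPdf : ∫ t, gumbelPdf t = 1 := by
  rw [gumb_subst gumbelPdf, setIntegral_congr_fun measurableSet_Ioi gumb_comp_pdf_eq]
  exact integral_exp_neg_Ioi_zero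

lemma gumb_comp_id_pdf_eq : ∀ u ∈ Ioi (0:ℝ),
    |(-u⁻¹)| • ((fun t => t * gumbelPdf t) (-Real.log u - Real.eulerMascheroniConstant))
      = -(Real.log u * Real.exp (-u)) - Real.eulerMascheroniConstant * Real.exp (-u) := by
  intro u hu
  simp only
  rw [gumb_pdf_comp u hu, abs_neg, abs_of_pos (inv_pos.mpr hu), smul_eq_mul]
  have hu' : u ≠ 0 := ne_of_gt (mem_Ioi.mp hu)
  field_simp

lemma hint1 : IntegrableOn (fun x : ℝ => -(Real.log x * Real.exp (-x))) (Ioi 0) :=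
  integrable_log_mul_exp_neg.neg

lemma hint2 : IntegrableOn
    (fun x : ℝ => Real.eulerMascheroniConstant * Real.exp (-x)) (Ioi 0) :=
  exp_neg_integrableOn_Ioi'.const_mul _

lemma integrable_id_mul_gumbelPdf : Integrable (fun t => t * gumbelPdf t) := by
  rw [gumb_subst_int]
  exact IntegrableOn.congr_fun (hint1.sub hint2)
    (fun u hu => (gumb_comp_id_pdf_eq u hu).symm) measurableSet_Ioi

lemma integral_id_mul_gumbelPdf : ∫ t, t * gumbelPdf t = 0 := by
  rw [gumb_subst (fun t => t * gumbelPdf t),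
    setIntegral_congr_fun measurableSet_Ioi gumb_comp_id_pdf_eq]
  rw [integral_sub hint1 hint2, integral_neg, integral_log_mul_exp_neg,
    integral_const_mul, integral_exp_neg_Ioi_zero]
  ring

lemma gumbelPdf_nonneg (t : ℝ) : 0 ≤ gumbelPdf t :=
  mul_nonneg (Real.exp_pos _).le (Real.exp_pos _).le

noncomputable def gumbelCdf (t : ℝ) : ℝ :=
  Real.exp (-Real.exp (-(t + Real.eulerMascheroniConstant)))

lemma hasDerivAt_gumbelCdf (a t : ℝ) :
    HasDerivAt (fun x => gumbelCdf (x - a)) (gumbelPdf (t - a)) t := by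
  have h1 : HasDerivAt (fun x : ℝ => -(x - a + Real.eulerMascheroniConstant)) (-1) t := by
    exact (((hasDerivAt_id t).sub_const a).add_const Real.eulerMascheroniConstant).neg
  have h2 := (h1.exp.neg).exp
  convert h2 using 1
  · rfl
  unfold gumbelPdf
  simp only [Pi.neg_apply]
  ring

lemma tendsto_gumbelCdf_atBot (a : ℝ) :
    Filter.Tendsto (fun x => gumbelCdf (x - a)) Filter.atBot (nhds 0) := by
  unfold gumbelCdf
  have h1 : Filter.Tendsto (fun x : ℝ => -(x - a + Real.eulerMascheroniConstant))
      Filter.atBot Filter.atTop :=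
    Filter.tendsto_neg_atBot_atTop.comp
      (Filter.tendsto_atBot_add_const_right _ _
        (Filter.tendsto_atBot_add_const_right _ _ Filter.tendsto_id))
  have h2 : Filter.Tendsto (fun x : ℝ => -Real.exp (-(x - a + Real.eulerMascheroniConstant)))
      Filter.atBot Filter.atBot :=
    Filter.tendsto_neg_atTop_atBot.comp (Real.tendsto_exp_atTop.comp h1)
  exact Real.tendsto_exp_atBot.comp h2

lemma integrable_gumbelPdf_shift (a : ℝ) : Integrable (fun x => gumbelPdf (x - a)) :=
  integrable_gumbelPdf.comp_sub_right a

lemma integral_Iic_gumbelPdf_shift (a t : ℝ) :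
    ∫ x in Iic t, gumbelPdf (x - a) = gumbelCdf (t - a) := by
  have := integral_Iic_of_hasDerivAt_of_tendsto' (a := t)
    (fun x _ => hasDerivAt_gumbelCdf a x) ((integrable_gumbelPdf_shift a).integrableOn)
    (tendsto_gumbelCdf_atBot a)
  simpa using this

lemma integral_gumbelPdf_shift (a : ℝ) : ∫ x, gumbelPdf (x - a) = 1 := by
  rw [integral_sub_right_eq_self gumbelPdf a, integral_gumbelPdf]

lemma gumbelPdf_shift_measurable (L : ℝ) : Measurable (fun s : ℝ => gumbelPdf (s - L)) := by
  apply Continuous.measurable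
  unfold gumbelPdf
  fun_prop

lemma integrable_id_mul_gumbelPdf_shift (L : ℝ) :
    Integrable (fun s : ℝ => s * gumbelPdf (s - L)) := by
  have h := (integrable_id_mul_gumbelPdf.add (integrable_gumbelPdf.const_mul L)).comp_sub_right L
  refine h.congr (Filter.Eventually.of_forall fun t => ?_)
  simp only [Pi.add_apply]
  ring_nf


/-- Let `X` be a finite nonempty set, `θ : X → ℝ`, and
`Z = ∑ x, exp (θ x)`.  If `γ x`, `x : X`, are independent random variables, each with the
zero-mean Gumbel distribution (cdf `t ↦ exp (-exp (-(t + c)))`, `c` the Euler–Mascheroni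
constant), then `E [max_x (θ x + γ x)] = log Z`. -/
theorem expected_perturbed_max_eq_log_partition
    {X : Type*} [Fintype X] [Nonempty X] (θ : X → ℝ)
    {Ω : Type*} [MeasurableSpace Ω] (P : Measure Ω) [IsProbabilityMeasure P]
    (γ : X → Ω → ℝ) (hmeas : ∀ x, Measurable (γ x))
    (hindep : iIndepFun γ P)
    (hcdf : ∀ x t, P {ω | γ x ω ≤ t} =
      ENNReal.ofReal (exp (-exp (-(t + eulerMascheroniConstant))))) :
    Integrable (fun ω => ⨆ x : X, (θ x + γ x ω)) P ∧
      ∫ ω, (⨆ x : X, (θ x + γ x ω)) ∂P = Real.log (∑ x : X, exp (θ x)) := by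
  set c := Real.eulerMascheroniConstant with hc
  set L := Real.log (∑ x : X, exp (θ x)) with hL
  have hZpos : (0:ℝ) < ∑ x : X, exp (θ x) :=
    Finset.sum_pos (fun x _ => Real.exp_pos _) Finset.univ_nonempty
  have hexpL : Real.exp L = ∑ x : X, exp (θ x) := Real.exp_log hZpos
  set M : Ω → ℝ := fun ω => ⨆ x : X, (θ x + γ x ω) with hM
  have hMmeas : Measurable M := by
    have h1 : Measurable (Finset.univ.sup' Finset.univ_nonempty
        (fun x : X => fun ω => θ x + γ x ω)) :=
      Finset.measurable_sup' _ (fun x _ => measurable_const.add (hmeas x))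
    have hfun : (Finset.univ.sup' Finset.univ_nonempty
        (fun x : X => fun ω => θ x + γ x ω)) = M := by
      funext ω
      show Finset.univ.sup' Finset.univ_nonempty
        (fun x : X => fun ω => θ x + γ x ω) ω = ⨆ x : X, (θ x + γ x ω)
      rw [Finset.sup'_apply, ← Finset.sup'_univ_eq_ciSup]
    exact hfun ▸ h1
  -- the CDF of M
  have hMcdf : ∀ t, P (M ⁻¹' Iic t) = ENNReal.ofReal (gumbelCdf (t - L)) := by
    intro t
    have hset : M ⁻¹' Iic t = ⋂ x : X, γ x ⁻¹' Iic (t - θ x) := by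
      ext ω
      simp only [mem_preimage, mem_Iic, mem_iInter, hM]
      rw [ciSup_le_iff (Finite.bddAbove_range _)]
      exact forall_congr' fun x => by constructor <;> intro h <;> linarith
    rw [hset, hindep.meas_iInter (fun x => ⟨Iic (t - θ x), measurableSet_Iic, rfl⟩)]
    have hone : ∀ x : X, P (γ x ⁻¹' Iic (t - θ x))
        = ENNReal.ofReal (exp (-exp (-(t - θ x + c)))) := fun x => hcdf x (t - θ x)
    simp_rw [hone]
    rw [← ENNReal.ofReal_prod_of_nonneg (fun x _ => (Real.exp_pos _).le)]
    congr 1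
    rw [← Real.exp_sum]
    unfold gumbelCdf
    congr 1
    have : ∀ x : X, -exp (-(t - θ x + c)) = -(exp (θ x) * exp (-(t + c))) := by
      intro x
      rw [← Real.exp_add]
      congr 1
      ring
    simp_rw [this]
    rw [Finset.sum_neg_distrib, ← Finset.sum_mul, ← hexpL, ← Real.exp_add]
    congr 2
    ring
  -- pushforward measure
  set ν : Measure ℝ := volume.withDensity (fun s => ENNReal.ofReal (gumbelPdf (s - L))) with hν
  have hνIic : ∀ t, ν (Iic t) = ENNReal.ofReal (gumbelCdf (t - L)) := by
    intro t
    rw [hν, withDensity_apply _ measurableSet_Iic,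
      ← ofReal_integral_eq_lintegral_ofReal (integrable_gumbelPdf_shift L).integrableOn
        (Filter.Eventually.of_forall fun s => gumbelPdf_nonneg _),
      integral_Iic_gumbelPdf_shift]
  have hν_univ : ν univ = 1 := by
    rw [hν, withDensity_apply _ MeasurableSet.univ, Measure.restrict_univ,
      ← ofReal_integral_eq_lintegral_ofReal (integrable_gumbelPdf_shift L)
        (Filter.Eventually.of_forall fun s => gumbelPdf_nonneg _),
      integral_gumbelPdf_shift, ENNReal.ofReal_one]
  have hmap : P.map M = ν := by
    haveI : IsProbabilityMeasure ν := ⟨hν_univ⟩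
    haveI : IsProbabilityMeasure (P.map M) := Measure.isProbabilityMeasure_map hMmeas.aemeasurable
    refine MeasureTheory.Measure.ext_of_Iic (P.map M) ν (fun t => ?_)
    rw [Measure.map_apply hMmeas measurableSet_Iic, hMcdf, hνIic]
  -- integrability
  have hint_id : Integrable (fun t : ℝ => t) ν := by
    rw [hν, integrable_withDensity_iff
      (gumbelPdf_shift_measurable L).ennreal_ofReal
      (Filter.Eventually.of_forall fun t => ENNReal.ofReal_lt_top)]
    refine (integrable_id_mul_gumbelPdf_shift L).congr
      (Filter.Eventually.of_forall fun t => ?_)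
    show t * gumbelPdf (t - L) = t * (ENNReal.ofReal (gumbelPdf (t - L))).toReal
    rw [ENNReal.toReal_ofReal (gumbelPdf_nonneg _)]
  have hintM : Integrable M P := by
    have := (integrable_map_measure aestronglyMeasurable_id hMmeas.aemeasurable).mp
      (by rw [hmap]; exact hint_id.congr (Filter.Eventually.of_forall fun t => rfl))
    exact this
  refine ⟨hintM, ?_⟩
  -- value of the integral
  have h1 : ∫ ω, M ω ∂P = ∫ t, (fun t : ℝ => t) t ∂(P.map M) :=
    (integral_map hMmeas.aemeasurable aestronglyMeasurable_id).symm
  rw [h1, hmap, hν]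
  have h2 : (fun s : ℝ => ENNReal.ofReal (gumbelPdf (s - L)))
      = fun s : ℝ => (((gumbelPdf (s - L)).toNNReal : ℝ≥0) : ℝ≥0∞) := rfl
  rw [h2, integral_withDensity_eq_integral_smul
    ((gumbelPdf_shift_measurable L).real_toNNReal)]
  have h3 : (fun t : ℝ => (gumbelPdf (t - L)).toNNReal • t)
      = fun t : ℝ => t * gumbelPdf (t - L) := by
    funext t
    rw [NNReal.smul_def, smul_eq_mul, Real.coe_toNNReal _ (gumbelPdf_nonneg _), mul_comm]
  rw [h3]
  have h4 : ∫ t : ℝ, t * gumbelPdf (t - L) = ∫ s : ℝ, (s + L) * gumbelPdf s := by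
    rw [← integral_sub_right_eq_self (fun s : ℝ => (s + L) * gumbelPdf s) L]
    congr 1
    funext t
    simp only [sub_add_cancel]
  rw [h4]
  have h5 : (fun s : ℝ => (s + L) * gumbelPdf s)
      = fun s : ℝ => s * gumbelPdf s + L * gumbelPdf s := by funext s; ring
  rw [h5, integral_add integrable_id_mul_gumbelPdf (integrable_gumbelPdf.const_mul L),
    integral_id_mul_gumbelPdf, integral_const_mul, integral_gumbelPdf]
  ring
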